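/- For every sequence i : ℕ → {0,1}, the diameters of the nested barycentric triangles for the triple (e,e,(23)) tend to zero: diam(Γ_{(e,e,23)}(i₁,…,iₙ)) → 0 as n → ∞. In particular the intersection over all n of these triangles is a single point. -/

import Mathlib

open Matrix MeasureTheory Filter

noncomputable section

/-- A point of ℝ² with the Euclidean metric. -/
def euclPt (x y : ℝ) : EuclideanSpace ℝ (Fin 2) :=
  (WithLp.equiv 2 (Fin 2 → ℝ)).symm ![x, y]

/-- Projection π(a,b,c) = (b/a, c/a), landing in Euclidean ℝ². -/
def projE (v : Fin 3 → ℝ) : EuclideanSpace ℝ (Fin 2) := euclPt (v 1 / v 0) (v 2 / v 0)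

def Vmat : Matrix (Fin 3) (Fin 3) ℝ := !![1,1,1; 0,1,1; 0,0,1]

def prodSeq (C : Fin 2 → Matrix (Fin 3) (Fin 3) ℝ) (i : ℕ → Fin 2) :
    ℕ → Matrix (Fin 3) (Fin 3) ℝ
  | 0 => 1
  | n + 1 => prodSeq C i n * C (i (n + 1))

/-- The subtriangle: convex hull of the π-images of the columns of V·C_{i₁}⋯C_{iₙ}. -/
def subTriE (C : Fin 2 → Matrix (Fin 3) (Fin 3) ℝ) (i : ℕ → Fin 2) (n : ℕ) :
    Set (EuclideanSpace ℝ (Fin 2)) :=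
  convexHull ℝ (Set.range fun j : Fin 3 => projE fun k => (Vmat * prodSeq C i n) k j)

/-- G₀(e,e,23) and G₁(e,e,23). -/
def Gee23 : Fin 2 → Matrix (Fin 3) (Fin 3) ℝ :=
  ![!![0,0,1/2; 1,0,0; 0,1,1/2], !![1,1/2,0; 0,0,1; 0,1/2,0]]

lemma fin2 (a : Fin 2) : a = 0 ∨ a = 1 := by fin_cases a <;> simp

lemma fin3 (a : Fin 3) : a = 0 ∨ a = 1 ∨ a = 2 := by fin_cases a <;> simp

def Amat (i : ℕ → Fin 2) (n : ℕ) : Matrix (Fin 3) (Fin 3) ℝ := Vmat * prodSeq Gee23 i n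

lemma Amat_succ (i : ℕ → Fin 2) (n : ℕ) :
    Amat i (n+1) = Amat i n * Gee23 (i (n+1)) := by
  simp [Amat, prodSeq, Matrix.mul_assoc]

lemma Amat_zero (i : ℕ → Fin 2) : Amat i 0 = Vmat := by simp [Amat, prodSeq]

-- entry recursion, i = 0 case
lemma step0 (i : ℕ → Fin 2) (n : ℕ) (h : i (n+1) = 0) (k : Fin 3) :
    Amat i (n+1) k 0 = Amat i n k 1 ∧ Amat i (n+1) k 1 = Amat i n k 2 ∧
    Amat i (n+1) k 2 = (Amat i n k 0 + Amat i n k 2)/2 := by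
  rw [Amat_succ, h]
  refine ⟨?_, ?_, ?_⟩ <;>
  · simp [Matrix.mul_apply, Fin.sum_univ_three, Gee23, Matrix.vecHead, Matrix.vecTail]
    try ring

lemma step1 (i : ℕ → Fin 2) (n : ℕ) (h : i (n+1) = 1) (k : Fin 3) :
    Amat i (n+1) k 0 = Amat i n k 0 ∧ Amat i (n+1) k 1 = (Amat i n k 0 + Amat i n k 2)/2 ∧
    Amat i (n+1) k 2 = Amat i n k 1 := by
  rw [Amat_succ, h]
  refine ⟨?_, ?_, ?_⟩ <;>
  · simp [Matrix.mul_apply, Fin.sum_univ_three, Gee23, Matrix.vecHead, Matrix.vecTail]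
    try ring

lemma row0 (i : ℕ → Fin 2) (n : ℕ) (j : Fin 3) : Amat i n 0 j = 1 := by
  induction n generalizing j with
  | zero => rw [Amat_zero]; fin_cases j <;> simp [Vmat]
  | succ n ih =>
    rcases fin2 (i (n+1)) with h | h
    · rcases step0 i n h 0 with ⟨h0, h1, h2⟩
      fin_cases j
      · show Amat i (n+1) 0 0 = 1; rw [h0]; exact ih 1
      · show Amat i (n+1) 0 1 = 1; rw [h1]; exact ih 2
      · show Amat i (n+1) 0 2 = 1; rw [h2, ih 0, ih 2]; norm_num
    · rcases step1 i n h 0 with ⟨h0, h1, h2⟩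
      fin_cases j
      · show Amat i (n+1) 0 0 = 1; rw [h0]; exact ih 0
      · show Amat i (n+1) 0 1 = 1; rw [h1, ih 0, ih 2]; norm_num
      · show Amat i (n+1) 0 2 = 1; rw [h2]; exact ih 1

def sfun (i : ℕ → Fin 2) (n : ℕ) : ℝ :=
  (Amat i n 1 0 - Amat i n 1 1)^2 + (Amat i n 2 0 - Amat i n 2 1)^2 +
  (Amat i n 1 1 - Amat i n 1 2)^2 + (Amat i n 2 1 - Amat i n 2 2)^2

lemma sfun_nonneg (i : ℕ → Fin 2) (n : ℕ) : 0 ≤ sfun i n := by unfold sfun; positivity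

lemma drec0 (i : ℕ → Fin 2) (n : ℕ) (h : i (n+1) = 0) (k : Fin 3) :
    Amat i (n+1) k 0 - Amat i (n+1) k 1 = (Amat i n k 1 - Amat i n k 2) ∧
    Amat i (n+1) k 1 - Amat i (n+1) k 2 =
      -((Amat i n k 0 - Amat i n k 1) + (Amat i n k 1 - Amat i n k 2))/2 := by
  obtain ⟨h0, h1, h2⟩ := step0 i n h k
  constructor <;> linarith
  
lemma drec1 (i : ℕ → Fin 2) (n : ℕ) (h : i (n+1) = 1) (k : Fin 3) :
    Amat i (n+1) k 0 - Amat i (n+1) k 1 =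
      ((Amat i n k 0 - Amat i n k 1) + (Amat i n k 1 - Amat i n k 2))/2 ∧
    Amat i (n+1) k 1 - Amat i (n+1) k 2 =
      ((Amat i n k 0 - Amat i n k 1) - (Amat i n k 1 - Amat i n k 2))/2 := by
  obtain ⟨h0, h1, h2⟩ := step1 i n h k
  constructor <;> linarith

lemma sfun_step (i : ℕ → Fin 2) (n : ℕ) : sfun i (n+1) ≤ 2 * sfun i n := by
  unfold sfun
  rcases fin2 (i (n+1)) with h | h
  · obtain ⟨a, b⟩ := drec0 i n h 1; obtain ⟨c, d⟩ := drec0 i n h 2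
    rw [a, b, c, d]; nlinarith [sq_nonneg (Amat i n 1 0 - Amat i n 1 1 - (Amat i n 1 1 - Amat i n 1 2)),
      sq_nonneg (Amat i n 2 0 - Amat i n 2 1 - (Amat i n 2 1 - Amat i n 2 2)),
      sq_nonneg (Amat i n 1 0 - Amat i n 1 1), sq_nonneg (Amat i n 2 0 - Amat i n 2 1)]
  · obtain ⟨a, b⟩ := drec1 i n h 1; obtain ⟨c, d⟩ := drec1 i n h 2
    rw [a, b, c, d]; nlinarith [sq_nonneg (Amat i n 1 0 - Amat i n 1 1), sq_nonneg (Amat i n 1 1 - Amat i n 1 2),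
      sq_nonneg (Amat i n 2 0 - Amat i n 2 1), sq_nonneg (Amat i n 2 1 - Amat i n 2 2)]

set_option maxHeartbeats 1000000 in
lemma sfun_step2 (i : ℕ → Fin 2) (n : ℕ) : sfun i (n+2) ≤ 7/8 * sfun i n := by
  have e : n + 1 + 1 = n + 2 := rfl
  set u1 := Amat i n 1 0 - Amat i n 1 1 with hu1
  set v1 := Amat i n 1 1 - Amat i n 1 2 with hv1
  set u2 := Amat i n 2 0 - Amat i n 2 1 with hu2
  set v2 := Amat i n 2 1 - Amat i n 2 2 with hv2
  unfold sfun
  rcases fin2 (i (n+2)) with h2 | h2 <;> rcases fin2 (i (n+1)) with h1 | h1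
  · obtain ⟨a, b⟩ := drec0 i (n+1) (show _ = _ from h2) 1
    obtain ⟨c, d⟩ := drec0 i (n+1) (show _ = _ from h2) 2
    rw [e] at a b c d
    obtain ⟨a2, b2⟩ := drec0 i n h1 1
    obtain ⟨c2, d2⟩ := drec0 i n h1 2
    rw [a, b, c, d, a2, b2, c2, d2, ← hu1, ← hv1, ← hu2, ← hv2]
    clear a b c d a2 b2 c2 d2 h1 h2 e
    clear_value u1 v1 u2 v2
    nlinarith [sq_nonneg (u1 - v1), sq_nonneg (u2 - v2), sq_nonneg (u1 + v1), sq_nonneg (u2 + v2), sq_nonneg u1, sq_nonneg v1, sq_nonneg u2, sq_nonneg v2]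
  · obtain ⟨a, b⟩ := drec0 i (n+1) (show _ = _ from h2) 1
    obtain ⟨c, d⟩ := drec0 i (n+1) (show _ = _ from h2) 2
    rw [e] at a b c d
    obtain ⟨a2, b2⟩ := drec1 i n h1 1
    obtain ⟨c2, d2⟩ := drec1 i n h1 2
    rw [a, b, c, d, a2, b2, c2, d2, ← hu1, ← hv1, ← hu2, ← hv2]
    clear a b c d a2 b2 c2 d2 h1 h2 e
    clear_value u1 v1 u2 v2
    nlinarith [sq_nonneg (u1 - v1), sq_nonneg (u2 - v2), sq_nonneg (u1 + v1), sq_nonneg (u2 + v2), sq_nonneg u1, sq_nonneg v1, sq_nonneg u2, sq_nonneg v2]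
  · obtain ⟨a, b⟩ := drec1 i (n+1) (show _ = _ from h2) 1
    obtain ⟨c, d⟩ := drec1 i (n+1) (show _ = _ from h2) 2
    rw [e] at a b c d
    obtain ⟨a2, b2⟩ := drec0 i n h1 1
    obtain ⟨c2, d2⟩ := drec0 i n h1 2
    rw [a, b, c, d, a2, b2, c2, d2, ← hu1, ← hv1, ← hu2, ← hv2]
    clear a b c d a2 b2 c2 d2 h1 h2 e
    clear_value u1 v1 u2 v2
    nlinarith [sq_nonneg (u1 - v1), sq_nonneg (u2 - v2), sq_nonneg (u1 + v1), sq_nonneg (u2 + v2), sq_nonneg u1, sq_nonneg v1, sq_nonneg u2, sq_nonneg v2]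
  · obtain ⟨a, b⟩ := drec1 i (n+1) (show _ = _ from h2) 1
    obtain ⟨c, d⟩ := drec1 i (n+1) (show _ = _ from h2) 2
    rw [e] at a b c d
    obtain ⟨a2, b2⟩ := drec1 i n h1 1
    obtain ⟨c2, d2⟩ := drec1 i n h1 2
    rw [a, b, c, d, a2, b2, c2, d2, ← hu1, ← hv1, ← hu2, ← hv2]
    clear a b c d a2 b2 c2 d2 h1 h2 e
    clear_value u1 v1 u2 v2
    nlinarith [sq_nonneg (u1 - v1), sq_nonneg (u2 - v2), sq_nonneg (u1 + v1), sq_nonneg (u2 + v2), sq_nonneg u1, sq_nonneg v1, sq_nonneg u2, sq_nonneg v2]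

lemma sfun_bound (i : ℕ → Fin 2) : ∀ n, sfun i n ≤ (sfun i 0 + sfun i 1) * (7/8 : ℝ)^(n/2) := by
  intro n
  induction n using Nat.strong_induction_on with
  | _ n ih =>
    match n with
    | 0 => norm_num; linarith [sfun_nonneg i 1]
    | 1 => norm_num; linarith [sfun_nonneg i 0]
    | (m+2) =>
      have h1 : sfun i (m+2) ≤ 7/8 * sfun i m := sfun_step2 i m
      have h2 := ih m (by omega)
      have h3 : (m+2)/2 = m/2 + 1 := by omega
      rw [h3, pow_succ]
      nlinarith [sfun_nonneg i m]

lemma sfun_tendsto (i : ℕ → Fin 2) : Tendsto (fun n => sfun i n) atTop (nhds 0) := by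
  have hdiv : Tendsto (fun n : ℕ => n / 2) atTop atTop := by
    apply tendsto_atTop_atTop.mpr
    intro b
    exact ⟨2 * b, fun n hn => by omega⟩
  have hpow : Tendsto (fun n : ℕ => (sfun i 0 + sfun i 1) * (7/8 : ℝ)^(n/2)) atTop (nhds 0) := by
    have := (tendsto_pow_atTop_nhds_zero_of_lt_one (by norm_num : (0:ℝ) ≤ 7/8)
      (by norm_num : (7/8:ℝ) < 1)).comp hdiv
    simpa using this.const_mul (sfun i 0 + sfun i 1)
  exact squeeze_zero (fun n => sfun_nonneg i n) (sfun_bound i) hpow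

lemma euclPt_apply0 (x y : ℝ) : euclPt x y 0 = x := rfl
lemma euclPt_apply1 (x y : ℝ) : euclPt x y 1 = y := rfl

lemma dist_euclPt (x y x' y' : ℝ) :
    dist (euclPt x y) (euclPt x' y') = Real.sqrt ((x - x')^2 + (y - y')^2) := by
  rw [EuclideanSpace.dist_eq]
  congr 1
  rw [Fin.sum_univ_two]
  simp [euclPt_apply0, euclPt_apply1, Real.dist_eq, sq_abs]

def vertE (i : ℕ → Fin 2) (n : ℕ) (j : Fin 3) : EuclideanSpace ℝ (Fin 2) :=
  projE fun k => Amat i n k j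

lemma vertE_eq (i : ℕ → Fin 2) (n : ℕ) (j : Fin 3) :
    vertE i n j = euclPt (Amat i n 1 j) (Amat i n 2 j) := by
  rw [vertE, projE, row0 i n j]
  simp

lemma subTriE_eq (i : ℕ → Fin 2) (n : ℕ) :
    subTriE Gee23 i n = convexHull ℝ (Set.range (vertE i n)) := rfl

lemma diam_le (i : ℕ → Fin 2) (n : ℕ) :
    Metric.diam (subTriE Gee23 i n) ≤ Real.sqrt (2 * sfun i n) := by
  rw [subTriE_eq, convexHull_diam]
  apply Metric.diam_le_of_forall_dist_le (Real.sqrt_nonneg _)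
  rintro _ ⟨j, rfl⟩ _ ⟨k, rfl⟩
  have hs := sfun_nonneg i n
  rcases fin3 j with rfl | rfl | rfl <;> rcases fin3 k with rfl | rfl | rfl <;>
    simp only [vertE_eq, dist_euclPt] <;>
    apply Real.sqrt_le_sqrt <;>
    unfold sfun <;> nlinarith [sq_nonneg (Amat i n 1 0 - Amat i n 1 1 + (Amat i n 1 1 - Amat i n 1 2)),
      sq_nonneg (Amat i n 2 0 - Amat i n 2 1 + (Amat i n 2 1 - Amat i n 2 2)),
      sq_nonneg (Amat i n 1 0 - Amat i n 1 1 - (Amat i n 1 1 - Amat i n 1 2)),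
      sq_nonneg (Amat i n 2 0 - Amat i n 2 1 - (Amat i n 2 1 - Amat i n 2 2)),
      sq_nonneg (Amat i n 1 0 - Amat i n 1 1), sq_nonneg (Amat i n 1 1 - Amat i n 1 2),
      sq_nonneg (Amat i n 2 0 - Amat i n 2 1), sq_nonneg (Amat i n 2 1 - Amat i n 2 2)]

lemma diam_tendsto (i : ℕ → Fin 2) :
    Tendsto (fun n => Metric.diam (subTriE Gee23 i n)) atTop (nhds 0) := by
  have h : Tendsto (fun n => Real.sqrt (2 * sfun i n)) atTop (nhds 0) := by
    have h2 : Tendsto (fun n => 2 * sfun i n) atTop (nhds 0) := by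
      simpa using (sfun_tendsto i).const_mul 2
    simpa [Real.sqrt_zero] using h2.sqrt
  exact squeeze_zero (fun n => Metric.diam_nonneg) (diam_le i) h

lemma euclPt_comb (a b c d : ℝ) :
    euclPt ((a+c)/2) ((b+d)/2) = (1/2 : ℝ) • euclPt a b + (1/2 : ℝ) • euclPt c d := by
  ext x
  fin_cases x <;>
    simp [euclPt_apply0, euclPt_apply1, PiLp.add_apply, PiLp.smul_apply, smul_eq_mul] <;> ring

lemma nested (i : ℕ → Fin 2) (n : ℕ) : subTriE Gee23 i (n+1) ⊆ subTriE Gee23 i n := by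
  rw [subTriE_eq, subTriE_eq]
  apply convexHull_min _ (convex_convexHull ℝ _)
  rintro _ ⟨j, rfl⟩
  have hsub := subset_convexHull ℝ (Set.range (vertE i n))
  have hv : ∀ k : Fin 3, vertE i n k ∈ convexHull ℝ (Set.range (vertE i n)) :=
    fun k => hsub ⟨k, rfl⟩
  have hmid : (1/2 : ℝ) • vertE i n 0 + (1/2 : ℝ) • vertE i n 2 ∈
      convexHull ℝ (Set.range (vertE i n)) :=
    (convex_convexHull ℝ _) (hv 0) (hv 2) (by norm_num) (by norm_num) (by norm_num)
  rcases fin2 (i (n+1)) with h | h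
  · rcases fin3 j with rfl | rfl | rfl
    · have : vertE i (n+1) 0 = vertE i n 1 := by
        rw [vertE_eq, vertE_eq, (step0 i n h 1).1, (step0 i n h 2).1]
      rw [this]; exact hv 1
    · have : vertE i (n+1) 1 = vertE i n 2 := by
        rw [vertE_eq, vertE_eq, (step0 i n h 1).2.1, (step0 i n h 2).2.1]
      rw [this]; exact hv 2
    · have : vertE i (n+1) 2 = (1/2 : ℝ) • vertE i n 0 + (1/2 : ℝ) • vertE i n 2 := by
        rw [vertE_eq, (step0 i n h 1).2.2, (step0 i n h 2).2.2, vertE_eq, vertE_eq,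
          euclPt_comb]
      rw [this]; exact hmid
  · rcases fin3 j with rfl | rfl | rfl
    · have : vertE i (n+1) 0 = vertE i n 0 := by
        rw [vertE_eq, vertE_eq, (step1 i n h 1).1, (step1 i n h 2).1]
      rw [this]; exact hv 0
    · have : vertE i (n+1) 1 = (1/2 : ℝ) • vertE i n 0 + (1/2 : ℝ) • vertE i n 2 := by
        rw [vertE_eq, (step1 i n h 1).2.1, (step1 i n h 2).2.1, vertE_eq, vertE_eq,
          euclPt_comb]
      rw [this]; exact hmid
    · have : vertE i (n+1) 2 = vertE i n 1 := by
        rw [vertE_eq, vertE_eq, (step1 i n h 1).2.2, (step1 i n h 2).2.2]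
      rw [this]; exact hv 1

/-- For every 0-1 sequence, the diameters of the nested barycentric triangles of
(e,e,23) tend to zero; in particular the intersection is a single point. -/
theorem stmt5 (i : ℕ → Fin 2) :
    Tendsto (fun n => Metric.diam (subTriE Gee23 i n)) atTop (nhds 0) ∧
    ∃ pt : EuclideanSpace ℝ (Fin 2), (⋂ n : ℕ, subTriE Gee23 i (n + 1)) = {pt} := by
  refine ⟨diam_tendsto i, ?_⟩
  set t : ℕ → Set (EuclideanSpace ℝ (Fin 2)) := fun n => subTriE Gee23 i (n+1) with ht
  have hcpt : ∀ n, IsCompact (t n) := by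
    intro n; rw [ht]; simp only [subTriE_eq]
    exact (Set.finite_range _).isCompact_convexHull ℝ
  have hne : ∀ n, (t n).Nonempty := fun n =>
    ⟨vertE i (n+1) 0, subset_convexHull ℝ _ ⟨0, rfl⟩⟩
  have hdec : ∀ n, t (n+1) ⊆ t n := fun n => nested i (n+1)
  obtain ⟨pt, hpt⟩ := IsCompact.nonempty_iInter_of_sequence_nonempty_isCompact_isClosed t
    hdec hne (hcpt 0) (fun n => (hcpt n).isClosed)
  refine ⟨pt, ?_⟩
  have hptmem : ∀ n, pt ∈ t n := fun n => Set.mem_iInter.mp hpt n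
  ext x
  simp only [Set.mem_iInter, Set.mem_singleton_iff]
  constructor
  · intro hx
    have hle : ∀ n, dist x pt ≤ Metric.diam (subTriE Gee23 i (n+1)) := fun n =>
      Metric.dist_le_diam_of_mem ((hcpt n).isBounded) (hx n) (hptmem n)
    have htend : Tendsto (fun n => Metric.diam (subTriE Gee23 i (n+1))) atTop (nhds 0) :=
      (diam_tendsto i).comp (tendsto_add_atTop_nat 1)
    have : dist x pt ≤ 0 := ge_of_tendsto' htend hle
    have := le_antisymm this dist_nonneg
    exact dist_eq_zero.mp this
  · rintro rfl
    exact hptmem
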